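/- Let n ≥ 2 be an integer, a ∈ (0, π/4), μ := −π/(2·ln(tan(a/2))) (note μ > 0 since tan(a/2) < 1), ω > 0 and ε₁ > 0. Define φ(x,t) := −μ·ln(tan(x/2)) + ω·cos(x)/ln(t) + ε₁ for x ∈ [a, π/2] and t ≥ 2. Then for all x ∈ [a, π/2] and t ≥ 2: (i) ∂_x φ(x,t) = −μ/sin x − ω·sin x/ln t < 0; and (ii) for every real P ≥ 1, ∂_t φ − (n−1)·(cos x/sin x)·∂_x φ − (1/P)·∂_{xx} φ ≥ 0. -/

import Mathlib

open Real Set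

set_option maxHeartbeats 1000000 in
/-- The explicit supersolution `φ(x,t) = −μ ln(tan(x/2)) + ω cos x/ln t + ε₁`, with
`μ = −π/(2 ln(tan(a/2)))`, satisfies on `[a, π/2] × [2, ∞)`:
(i) `∂_x φ = −μ/sin x − ω sin x/ln t < 0`, and
(ii) `∂_t φ − (n−1)(cos x/sin x)∂_x φ − (1/P)∂_{xx} φ ≥ 0` for every `P ≥ 1`. -/
theorem explicit_supersolution_gradient_estimate
    (n : ℕ) (hn : 2 ≤ n) (a : ℝ) (ha : a ∈ Set.Ioo 0 (π / 4))
    (μ ω ε₁ : ℝ) (hμ : μ = -π / (2 * Real.log (Real.tan (a / 2))))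
    (hω : 0 < ω) (hε₁ : 0 < ε₁)
    (φ : ℝ → ℝ → ℝ)
    (hφ : ∀ x t, φ x t = -μ * Real.log (Real.tan (x / 2))
      + ω * Real.cos x / Real.log t + ε₁) :
    ∀ x ∈ Set.Icc a (π / 2), ∀ t : ℝ, 2 ≤ t →
      (deriv (fun x' => φ x' t) x = -μ / Real.sin x - ω * Real.sin x / Real.log t ∧
        deriv (fun x' => φ x' t) x < 0) ∧
      (∀ P : ℝ, 1 ≤ P →
        deriv (fun s => φ x s) t
          - ((n : ℝ) - 1) * (Real.cos x / Real.sin x) * deriv (fun x' => φ x' t) x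
          - (1 / P) * deriv (deriv (fun x' => φ x' t)) x ≥ 0) := by
  obtain ⟨ha0, ha4⟩ := ha
  have hπ : (0:ℝ) < π := pi_pos
  intro x hx t ht
  obtain ⟨hax, hx2⟩ := hx
  have hx0 : 0 < x := lt_of_lt_of_le ha0 hax
  have hxπ : x < π := lt_of_le_of_lt hx2 (by linarith)
  have hsin : 0 < Real.sin x := Real.sin_pos_of_pos_of_lt_pi hx0 hxπ
  have hcos0 : 0 ≤ Real.cos x := Real.cos_nonneg_of_mem_Icc ⟨by linarith, hx2⟩
  have ht0 : (0:ℝ) < t := by linarith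
  have hL : 0 < Real.log t := Real.log_pos (by linarith)
  have hL2 : Real.log 2 ≤ Real.log t := Real.log_le_log (by norm_num) ht
  have htL : 1 ≤ t * Real.log t := by
    nlinarith [Real.log_two_gt_d9]
  -- μ > 0
  have htan_a0 : 0 < Real.tan (a / 2) := by
    rw [Real.tan_eq_sin_div_cos]
    apply div_pos
    · exact Real.sin_pos_of_pos_of_lt_pi (by linarith) (by linarith)
    · exact Real.cos_pos_of_mem_Ioo ⟨by linarith, by linarith⟩
  have htan_a1 : Real.tan (a / 2) < 1 := by
    have := Real.tan_lt_tan_of_lt_of_lt_pi_div_two (x := a / 2) (y := π / 4)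
      (by linarith) (by linarith) (by linarith)
    rwa [Real.tan_pi_div_four] at this
  have hloga : Real.log (Real.tan (a / 2)) < 0 := Real.log_neg htan_a0 htan_a1
  have hμ0 : 0 < μ := by
    rw [hμ]; exact div_pos_of_neg_of_neg (by linarith) (by linarith)
  -- x-derivative of φ at every y ∈ (0, π)
  have key : ∀ y ∈ Set.Ioo (0:ℝ) π, HasDerivAt (fun x' => φ x' t)
      (-μ / Real.sin y - ω * Real.sin y / Real.log t) y := by
    intro y hy
    obtain ⟨hy0, hyπ⟩ := hy
    have hsiny : 0 < Real.sin y := Real.sin_pos_of_pos_of_lt_pi hy0 hyπ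
    have hch : 0 < Real.cos (y / 2) := Real.cos_pos_of_mem_Ioo ⟨by linarith, by linarith⟩
    have hsh : 0 < Real.sin (y / 2) := Real.sin_pos_of_pos_of_lt_pi (by linarith) (by linarith)
    have htanh : 0 < Real.tan (y / 2) := by
      rw [Real.tan_eq_sin_div_cos]; exact div_pos hsh hch
    have h1 : HasDerivAt (fun x' : ℝ => x' / 2) (1 / 2) y := by
      simpa using (hasDerivAt_id y).div_const 2
    have h2 : HasDerivAt (fun x' : ℝ => Real.tan (x' / 2))
        (1 / Real.cos (y / 2) ^ 2 * (1 / 2)) y :=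
      by have := (Real.hasDerivAt_tan hch.ne').comp y h1; exact this
    have h3 : HasDerivAt (fun x' : ℝ => Real.log (Real.tan (x' / 2)))
        ((Real.tan (y / 2))⁻¹ * (1 / Real.cos (y / 2) ^ 2 * (1 / 2))) y :=
      by have := (Real.hasDerivAt_log htanh.ne').comp y h2; exact this
    have h4 : HasDerivAt (fun x' : ℝ => ω * Real.cos x' / Real.log t)
        (ω * (-Real.sin y) / Real.log t) y :=
      ((Real.hasDerivAt_cos y).const_mul ω).div_const (Real.log t)
    have h5 := ((h3.const_mul (-μ)).add h4).add_const ε₁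
    have hsin_eq : Real.sin y = 2 * Real.sin (y / 2) * Real.cos (y / 2) := by
      have := Real.sin_two_mul (y / 2)
      rwa [show 2 * (y / 2) = y by ring] at this
    have hval : -μ * ((Real.tan (y / 2))⁻¹ * (1 / Real.cos (y / 2) ^ 2 * (1 / 2)))
        + ω * (-Real.sin y) / Real.log t
        = -μ / Real.sin y - ω * Real.sin y / Real.log t := by
      rw [Real.tan_eq_sin_div_cos, hsin_eq]
      field_simp
      ring
    have hfun : (fun x' => φ x' t)
        = fun x' => -μ * Real.log (Real.tan (x' / 2)) + ω * Real.cos x' / Real.log t + ε₁ :=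
      funext fun x' => hφ x' t
    rw [hfun]
    rw [← hval]
    exact h5
  have hx_mem : x ∈ Set.Ioo (0:ℝ) π := ⟨hx0, hxπ⟩
  have hderiv1 : deriv (fun x' => φ x' t) x
      = -μ / Real.sin x - ω * Real.sin x / Real.log t := (key x hx_mem).deriv
  constructor
  · refine ⟨hderiv1, ?_⟩
    rw [hderiv1, neg_div]
    have h1 : 0 < μ / Real.sin x := div_pos hμ0 hsin
    have h2 : 0 < ω * Real.sin x / Real.log t := div_pos (mul_pos hω hsin) hL
    linarith
  · intro P hP
    have hP0 : (0:ℝ) < P := lt_of_lt_of_le one_pos hP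
    -- second x-derivative
    have hev : deriv (fun x' => φ x' t)
        =ᶠ[nhds x] fun y => -μ / Real.sin y - ω * Real.sin y / Real.log t := by
      filter_upwards [isOpen_Ioo.mem_nhds hx_mem] with y hy
      exact (key y hy).deriv
    have hg : HasDerivAt (fun y => -μ / Real.sin y - ω * Real.sin y / Real.log t)
        (μ * Real.cos x / Real.sin x ^ 2 - ω * Real.cos x / Real.log t) x := by
      have hA : HasDerivAt (fun y => -μ / Real.sin y)
          ((0 * Real.sin x - -μ * Real.cos x) / Real.sin x ^ 2) x :=
        (hasDerivAt_const x (-μ)).div (Real.hasDerivAt_sin x) hsin.ne'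
      have hB : HasDerivAt (fun y => ω * Real.sin y / Real.log t)
          (ω * Real.cos x / Real.log t) x :=
        ((Real.hasDerivAt_sin x).const_mul ω).div_const (Real.log t)
      have := hA.fun_sub hB
      refine this.congr_deriv ?_
      ring
    have hderiv2 : deriv (deriv (fun x' => φ x' t)) x
        = μ * Real.cos x / Real.sin x ^ 2 - ω * Real.cos x / Real.log t := by
      rw [hev.deriv_eq]; exact hg.deriv
    -- t-derivative
    have hT : HasDerivAt (fun s => φ x s)
        ((0 * Real.log t - ω * Real.cos x * t⁻¹) / Real.log t ^ 2) t := by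
      have hfun : (fun s => φ x s)
          = fun s => -μ * Real.log (Real.tan (x / 2)) + ω * Real.cos x / Real.log s + ε₁ :=
        funext fun s => hφ x s
      rw [hfun]
      exact (((hasDerivAt_const t (ω * Real.cos x)).div
        (Real.hasDerivAt_log ht0.ne') hL.ne').const_add _).add_const ε₁
    rw [hT.deriv, hderiv1, hderiv2]
    have hn1 : (1:ℝ) ≤ (n:ℝ) - 1 := by
      have : (2:ℝ) ≤ (n:ℝ) := by exact_mod_cast hn
      linarith
    -- rewrite expression as sum of two nonnegative terms
    have hexp : (0 * Real.log t - ω * Real.cos x * t⁻¹) / Real.log t ^ 2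
        - ((n : ℝ) - 1) * (Real.cos x / Real.sin x)
          * (-μ / Real.sin x - ω * Real.sin x / Real.log t)
        - 1 / P * (μ * Real.cos x / Real.sin x ^ 2 - ω * Real.cos x / Real.log t)
        = μ * Real.cos x * (((n:ℝ) - 1) * P - 1) / (P * Real.sin x ^ 2)
          + ω * Real.cos x * ((((n:ℝ) - 1) * P + 1) * (t * Real.log t) - P)
            / (P * t * Real.log t ^ 2) := by
      field_simp
      ring
    rw [hexp]
    have e1 : 0 ≤ μ * Real.cos x * (((n:ℝ) - 1) * P - 1) / (P * Real.sin x ^ 2) := by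
      apply div_nonneg _ (by positivity)
      apply mul_nonneg (by positivity)
      nlinarith
    have e2 : 0 ≤ ω * Real.cos x * ((((n:ℝ) - 1) * P + 1) * (t * Real.log t) - P)
        / (P * t * Real.log t ^ 2) := by
      apply div_nonneg _ (by positivity)
      apply mul_nonneg (by positivity)
      have hq : (1:ℝ) ≤ ((n:ℝ) - 1) * P := by nlinarith
      nlinarith [mul_le_mul_of_nonneg_left htL (by linarith : (0:ℝ) ≤ ((n:ℝ) - 1) * P + 1)]
    linarith
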